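/- arXiv:2011.00783 — 3 statements merged into one kernel-verified Lean document; each statement's English description precedes it below -/
import Mathlib

section
/- Let E(x) be a symmetric matrix with eigenvalues in [a, ∞), a > 1/2. There is a constant C > 0 such that for all x, ξ ∈ ℝ^d, θ ∈ S^{d−1}, and r > 0: |1 − e^{i⟨r^{E(x)}θ, ξ⟩} + i⟨r^{E(x)}θ, ξ⟩ 1_{(0,1)}(r)| ≤ C (1 + ‖ξ‖²)(1 ∧ r^{2a}). Moreover ∫₀^∞ (1 ∧ r^{2a}) r^{−2} dr < ∞. -/
open Matrix MeasureTheory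
open scoped ENNReal

noncomputable def toCLM {d : ℕ} (A : Matrix (Fin d) (Fin d) ℝ) :
    EuclideanSpace ℝ (Fin d) →L[ℝ] EuclideanSpace ℝ (Fin d) :=
  LinearMap.toContinuousLinearMap (Matrix.toEuclideanLin A)

/-- `mexp A r` is the matrix power `r^A := exp(A log r)`, acting on Euclidean space,
so that `‖mexp A r‖` is the operator norm induced by the Euclidean norm. -/
noncomputable def mexp {d : ℕ} (A : Matrix (Fin d) (Fin d) ℝ) (r : ℝ) :
    EuclideanSpace ℝ (Fin d) →L[ℝ] EuclideanSpace ℝ (Fin d) :=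
  NormedSpace.exp (Real.log r • toCLM A)

section Aux

attribute [local instance] Matrix.linftyOpNormedRing Matrix.linftyOpNormedAlgebra

lemma unit_norm {d : ℕ} (V : Matrix (Fin d) (Fin d) ℝ) (h : star V * V = 1)
    (w : EuclideanSpace ℝ (Fin d)) :
    ‖Matrix.toEuclideanCLM (𝕜 := ℝ) V w‖ = ‖w‖ := by
  set T : Matrix (Fin d) (Fin d) ℝ ≃⋆ₐ[ℝ]
      (EuclideanSpace ℝ (Fin d) →L[ℝ] EuclideanSpace ℝ (Fin d)) :=
    Matrix.toEuclideanCLM (𝕜 := ℝ) with hT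
  have h1 : star (T V) * T V = 1 := by rw [← map_star, ← _root_.map_mul, h, _root_.map_one]
  have h2 : (inner ℝ (T V w) (T V w) : ℝ) = inner ℝ w w := by
    calc (inner ℝ (T V w) (T V w) : ℝ)
        = inner ℝ (ContinuousLinearMap.adjoint (T V) (T V w)) w := by
          rw [ContinuousLinearMap.adjoint_inner_left]
      _ = inner ℝ ((star (T V) * T V) w) w := by
          rw [ContinuousLinearMap.star_eq_adjoint, ContinuousLinearMap.mul_apply]
      _ = inner ℝ w w := by rw [h1, ContinuousLinearMap.one_apply]
  have h3 : ‖T V w‖ ^ 2 = ‖w‖ ^ 2 := by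
    rw [← real_inner_self_eq_norm_sq, ← real_inner_self_eq_norm_sq, h2]
  rw [← Real.sqrt_sq (norm_nonneg (T V w)), ← Real.sqrt_sq (norm_nonneg w), h3]

lemma diag_norm {d : ℕ} (g : Fin d → ℝ) (b : ℝ) (hb0 : 0 ≤ b) (hb : ∀ i, |g i| ≤ b)
    (w : EuclideanSpace ℝ (Fin d)) :
    ‖Matrix.toEuclideanCLM (𝕜 := ℝ) (Matrix.diagonal g) w‖ ≤ b * ‖w‖ := by
  have hcoord : ∀ i, (Matrix.toEuclideanCLM (𝕜 := ℝ) (Matrix.diagonal g) w) i = g i * w i := by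
    intro i
    have := congrFun (Matrix.ofLp_toEuclideanCLM (𝕜 := ℝ) (Matrix.diagonal g) w) i
    simpa [Matrix.toLin'_apply, Matrix.mulVec_diagonal] using this
  rw [EuclideanSpace.norm_eq, EuclideanSpace.norm_eq]
  have hsum : ∑ i, ‖(Matrix.toEuclideanCLM (𝕜 := ℝ) (Matrix.diagonal g) w) i‖ ^ 2
      ≤ b ^ 2 * ∑ i, ‖w i‖ ^ 2 := by
    rw [Finset.mul_sum]
    apply Finset.sum_le_sum
    intro i _
    rw [hcoord i]
    have h1 : ‖g i * w i‖ = |g i| * ‖w i‖ := by simp [abs_mul, Real.norm_eq_abs]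
    rw [h1, mul_pow]
    exact mul_le_mul_of_nonneg_right
      (pow_le_pow_left₀ (abs_nonneg _) (hb i) 2) (sq_nonneg _)
  have h2 : b * Real.sqrt (∑ i, ‖w i‖ ^ 2) = Real.sqrt (b ^ 2 * ∑ i, ‖w i‖ ^ 2) := by
    rw [Real.sqrt_mul (sq_nonneg b), Real.sqrt_sq hb0]
  rw [h2]
  exact Real.sqrt_le_sqrt hsum

lemma toCLM_eq {d : ℕ} (A : Matrix (Fin d) (Fin d) ℝ) :
    toCLM A = Matrix.toEuclideanCLM (𝕜 := ℝ) A := by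
  apply ContinuousLinearMap.coe_injective
  rw [Matrix.coe_toEuclideanCLM_eq_toEuclideanLin]
  rfl

lemma clm_exp {d : ℕ} (M : Matrix (Fin d) (Fin d) ℝ) :
    NormedSpace.exp (Matrix.toEuclideanCLM (𝕜 := ℝ) M) =
      Matrix.toEuclideanCLM (𝕜 := ℝ) (NormedSpace.exp M) := by
  have hc : Continuous (fun M : Matrix (Fin d) (Fin d) ℝ => Matrix.toEuclideanCLM (𝕜 := ℝ) M) := by
    have : (fun M : Matrix (Fin d) (Fin d) ℝ => Matrix.toEuclideanCLM (𝕜 := ℝ) M) =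
        ({ toFun := fun M => Matrix.toEuclideanCLM (𝕜 := ℝ) M,
           map_add' := fun x y => map_add _ x y,
           map_smul' := fun c x => map_smul _ c x } :
          Matrix (Fin d) (Fin d) ℝ →ₗ[ℝ]
            (EuclideanSpace ℝ (Fin d) →L[ℝ] EuclideanSpace ℝ (Fin d))) := rfl
    rw [this]
    exact LinearMap.continuous_of_finiteDimensional _
  exact (NormedSpace.map_exp (Matrix.toEuclideanCLM (𝕜 := ℝ)) hc M).symm

lemma key {d : ℕ} {A : Matrix (Fin d) (Fin d) ℝ} (hA : A.IsHermitian) {a t : ℝ}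
    (heig : ∀ i, a ≤ hA.eigenvalues i) (ht : t ≤ 0) (v : EuclideanSpace ℝ (Fin d)) :
    ‖NormedSpace.exp (t • toCLM A) v‖ ≤ Real.exp (t * a) * ‖v‖ := by
  set U : Matrix (Fin d) (Fin d) ℝ := (hA.eigenvectorUnitary : Matrix (Fin d) (Fin d) ℝ) with hUdef
  have hU : star U * U = 1 := Unitary.coe_star_mul_self hA.eigenvectorUnitary
  have hU' : U * star U = 1 := Unitary.coe_mul_star_self hA.eigenvectorUnitary
  have hUinv : U⁻¹ = star U := Matrix.inv_eq_left_inv hU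
  have hUnit : IsUnit U := ⟨⟨U, star U, hU', hU⟩, rfl⟩
  have hmat : t • A = U * Matrix.diagonal (fun i => t * hA.eigenvalues i) * U⁻¹ := by
    rw [hUinv]
    conv_lhs => rw [hA.spectral_theorem]
    have hd : (fun i => t * hA.eigenvalues i)
        = t • (RCLike.ofReal ∘ hA.eigenvalues : Fin d → ℝ) := funext fun i => by simp
    rw [hd, Matrix.diagonal_smul, Matrix.mul_smul, Matrix.smul_mul]
    exact rfl
  have hexp : NormedSpace.exp (t • A)
      = U * Matrix.diagonal (fun i => Real.exp (t * hA.eigenvalues i)) * star U := by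
    rw [hmat, Matrix.exp_conj U _ hUnit, Matrix.exp_diagonal, hUinv]
    congr 2
    funext i
    rw [Pi.exp_def]
    simp [← Real.exp_eq_exp_ℝ]
  have e1 : NormedSpace.exp (t • toCLM A)
      = Matrix.toEuclideanCLM (𝕜 := ℝ) (NormedSpace.exp (t • A)) := by
    rw [toCLM_eq, ← _root_.map_smul, clm_exp]
  rw [e1, hexp, _root_.map_mul, _root_.map_mul, ContinuousLinearMap.mul_apply,
    ContinuousLinearMap.mul_apply, unit_norm U hU]
  have h2 := diag_norm (fun i => Real.exp (t * hA.eigenvalues i)) (Real.exp (t * a))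
    (Real.exp_nonneg _) (fun i => by
      rw [abs_of_nonneg (Real.exp_nonneg _)]
      exact Real.exp_le_exp.2 (mul_le_mul_of_nonpos_left (heig i) ht))
    (Matrix.toEuclideanCLM (𝕜 := ℝ) (star U) v)
  calc ‖Matrix.toEuclideanCLM (𝕜 := ℝ) (Matrix.diagonal fun i => Real.exp (t * hA.eigenvalues i))
        ((Matrix.toEuclideanCLM (𝕜 := ℝ) (star U)) v)‖
      ≤ Real.exp (t * a) * ‖(Matrix.toEuclideanCLM (𝕜 := ℝ) (star U)) v‖ := h2
    _ = Real.exp (t * a) * ‖v‖ := by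
        rw [unit_norm (star U) (by rw [star_star, hU']) v]

lemma habs_exp (s : ℝ) : ‖Complex.exp (Complex.I * s)‖ = 1 := by
  rw [Complex.norm_exp]
  simp [Complex.mul_re]

lemma cabs1 (s : ℝ) :
    ‖1 - Complex.exp (Complex.I * s) + Complex.I * s‖ ≤ 3 * s ^ 2 := by
  have hIs : ‖Complex.I * s‖ = |s| := by
    rw [norm_mul, Complex.norm_I, Complex.norm_real, one_mul, Real.norm_eq_abs]
  have hkey : (1 : ℂ) - Complex.exp (Complex.I * s) + Complex.I * s
      = -(Complex.exp (Complex.I * s) - 1 - Complex.I * s) := by ring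
  rw [hkey, norm_neg]
  by_cases h : |s| ≤ 1
  · have h2 := Complex.norm_exp_sub_one_sub_id_le (x := Complex.I * s) (by rw [hIs]; exact h)
    rw [hIs] at h2
    calc ‖Complex.exp (Complex.I * s) - 1 - Complex.I * s‖ ≤ |s| ^ 2 := h2
      _ = s ^ 2 := sq_abs s
      _ ≤ 3 * s ^ 2 := by nlinarith [sq_nonneg s]
  · push_neg at h
    calc ‖Complex.exp (Complex.I * s) - 1 - Complex.I * s‖
        = ‖Complex.exp (Complex.I * s) - 1 - Complex.I * s‖ := rfl
      _ ≤ ‖Complex.exp (Complex.I * s) - 1‖ + ‖Complex.I * (s : ℂ)‖ := norm_sub_le _ _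
      _ ≤ (‖Complex.exp (Complex.I * s)‖ + ‖(1 : ℂ)‖) + ‖Complex.I * (s : ℂ)‖ := by
          gcongr; exact norm_sub_le _ _
      _ = 2 + |s| := by
          rw [habs_exp, hIs]
          norm_num
      _ ≤ 3 * s ^ 2 := by nlinarith [sq_abs s, abs_nonneg s]

lemma cabs2 (s : ℝ) : ‖1 - Complex.exp (Complex.I * s)‖ ≤ 2 := by
  calc ‖1 - Complex.exp (Complex.I * s)‖
      = ‖(1:ℂ) - Complex.exp (Complex.I * s)‖ := rfl
    _ ≤ ‖(1:ℂ)‖ + ‖Complex.exp (Complex.I * s)‖ := norm_sub_le _ _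
    _ = 2 := by rw [habs_exp]; norm_num

end Aux

theorem stmt9 (d : ℕ) (a : ℝ) (ha : 1/2 < a)
    (E : EuclideanSpace ℝ (Fin d) → Matrix (Fin d) (Fin d) ℝ)
    (hsym : ∀ x, (E x).IsHermitian)
    (heig : ∀ x i, a ≤ (hsym x).eigenvalues i) :
    (∃ C : ℝ, 0 < C ∧ ∀ (x ξ θ : EuclideanSpace ℝ (Fin d)), ‖θ‖ = 1 → ∀ r : ℝ, 0 < r →
      ‖(1 - Complex.exp (Complex.I * ((inner ℝ (mexp (E x) r θ) ξ : ℝ) : ℂ)) +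
          (Set.Ioo (0:ℝ) 1).indicator
            (fun _ => Complex.I * ((inner ℝ (mexp (E x) r θ) ξ : ℝ) : ℂ)) r)‖
        ≤ C * (1 + ‖ξ‖ ^ 2) * min 1 (r ^ (2 * a))) ∧
    ∫⁻ r in Set.Ioi (0:ℝ), ENNReal.ofReal (min 1 (r ^ (2 * a)) / r ^ 2) < ⊤ := by
  have h2a : (0:ℝ) < 2 * a := by linarith
  constructor
  · refine ⟨3, by norm_num, ?_⟩
    intro x ξ θ hθ r hr
    set s : ℝ := inner ℝ (mexp (E x) r θ) ξ with hs
    rcases lt_or_ge r 1 with h1 | h1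
    · -- 0 < r < 1
      rw [Set.indicator_of_mem (Set.mem_Ioo.2 ⟨hr, h1⟩)]
      have hkey : ‖mexp (E x) r θ‖ ≤ r ^ a := by
        have := key (hsym x) (heig x) (t := Real.log r)
          (Real.log_nonpos hr.le h1.le) θ
        rw [hθ, mul_one] at this
        rw [Real.rpow_def_of_pos hr]
        exact this
      have hsb : |s| ≤ r ^ a * ‖ξ‖ :=
        le_trans (abs_real_inner_le_norm _ _)
          (mul_le_mul_of_nonneg_right hkey (norm_nonneg ξ))
      have hsq : s ^ 2 ≤ r ^ (2 * a) * ‖ξ‖ ^ 2 := by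
        have h3 : (r ^ a) ^ 2 = r ^ (2 * a) := by
          rw [← Real.rpow_natCast (r ^ a) 2, ← Real.rpow_mul hr.le]
          norm_num
          ring_nf
        calc s ^ 2 = |s| ^ 2 := (sq_abs s).symm
          _ ≤ (r ^ a * ‖ξ‖) ^ 2 := pow_le_pow_left₀ (abs_nonneg s) hsb 2
          _ = r ^ (2 * a) * ‖ξ‖ ^ 2 := by rw [mul_pow, h3]
      have hmin : min 1 (r ^ (2 * a)) = r ^ (2 * a) :=
        min_eq_right (Real.rpow_le_one hr.le h1.le h2a.le)
      rw [hmin]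
      have hrp : (0:ℝ) ≤ r ^ (2 * a) := Real.rpow_nonneg hr.le _
      calc ‖1 - Complex.exp (Complex.I * s) + Complex.I * s‖
          ≤ 3 * s ^ 2 := cabs1 s
        _ ≤ 3 * (r ^ (2 * a) * ‖ξ‖ ^ 2) := by linarith
        _ ≤ 3 * (1 + ‖ξ‖ ^ 2) * r ^ (2 * a) := by nlinarith [sq_nonneg ‖ξ‖]
    · -- 1 ≤ r
      rw [Set.indicator_of_notMem (by
        intro hmem
        exact absurd hmem.2 (not_lt.2 h1)), add_zero]
      have hmin : min 1 (r ^ (2 * a)) = 1 :=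
        min_eq_left (Real.one_le_rpow h1 h2a.le)
      rw [hmin, mul_one]
      calc ‖1 - Complex.exp (Complex.I * s)‖ ≤ 2 := cabs2 s
        _ ≤ 3 * (1 + ‖ξ‖ ^ 2) := by nlinarith [sq_nonneg ‖ξ‖]
  · have hIoi : Set.Ioi (0:ℝ) = Set.Ioc 0 1 ∪ Set.Ioi 1 :=
      (Set.Ioc_union_Ioi_eq_Ioi zero_le_one).symm
    rw [hIoi, lintegral_union measurableSet_Ioi (Set.Ioc_disjoint_Ioi le_rfl)]
    have hA : ∫⁻ r in Set.Ioc (0:ℝ) 1, ENNReal.ofReal (min 1 (r ^ (2 * a)) / r ^ 2) < ⊤ := by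
      have hle : ∫⁻ r in Set.Ioc (0:ℝ) 1, ENNReal.ofReal (min 1 (r ^ (2 * a)) / r ^ 2)
          ≤ ∫⁻ r in Set.Ioc (0:ℝ) 1, ENNReal.ofReal (r ^ (2 * a - 2)) := by
        apply setLIntegral_mono' measurableSet_Ioc
        intro r hrm
        apply ENNReal.ofReal_le_ofReal
        rw [min_eq_right (Real.rpow_le_one hrm.1.le hrm.2 h2a.le)]
        rw [Real.rpow_sub hrm.1]
        rw [show ((2:ℝ)) = ((2:ℕ):ℝ) by norm_num, Real.rpow_natCast]
      refine hle.trans_lt ?_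
      rw [← Measure.restrict_congr_set Ioo_ae_eq_Ioc]
      have hint : IntegrableOn (fun r : ℝ => r ^ (2 * a - 2)) (Set.Ioo 0 1) :=
        (intervalIntegral.integrableOn_Ioo_rpow_iff zero_lt_one).2 (by linarith)
      exact hint.lintegral_lt_top
    have hB : ∫⁻ r in Set.Ioi (1:ℝ), ENNReal.ofReal (min 1 (r ^ (2 * a)) / r ^ 2) < ⊤ := by
      have hle : ∫⁻ r in Set.Ioi (1:ℝ), ENNReal.ofReal (min 1 (r ^ (2 * a)) / r ^ 2)
          ≤ ∫⁻ r in Set.Ioi (1:ℝ), ENNReal.ofReal (r ^ (-2:ℝ)) := by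
        apply setLIntegral_mono' measurableSet_Ioi
        intro r hrm
        apply ENNReal.ofReal_le_ofReal
        rw [min_eq_left (Real.one_le_rpow hrm.le h2a.le)]
        rw [Real.rpow_neg (by linarith [Set.mem_Ioi.mp hrm] : (0:ℝ) ≤ r),
          show ((2:ℝ)) = ((2:ℕ):ℝ) by norm_num, Real.rpow_natCast]
        rw [one_div]
      refine hle.trans_lt ?_
      have hint : IntegrableOn (fun r : ℝ => r ^ (-2:ℝ)) (Set.Ioi 1) :=
        (integrableOn_Ioi_rpow_iff zero_lt_one).2 (by norm_num)
      exact hint.lintegral_lt_top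
    exact ENNReal.add_lt_top.2 ⟨hA, hB⟩
end

section
/- Define q(x,ξ) := ∫_{S^{d−1}} ∫₀^∞ (1 − e^{i⟨r^{E(x)}θ,ξ⟩} + 1_{(0,1)}(r) i⟨r^{E(x)}θ,ξ⟩) r^{−2} dr σ(dθ), where E(x) is symmetric with eigenvalues ≥ a > 1/2 for all x and σ is finite. Then there exists C > 0 with sup_{x ∈ ℝ^d} |q(x,ξ)| ≤ C(1 + ‖ξ‖²) for all ξ ∈ ℝ^d. -/
open Matrix MeasureTheory
open scoped ENNReal Nat

/-- The symbol `q(x,ξ)` of an operator-stable-like process, here for the matrix `E = E(x)`: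
`q(x,ξ) = ∫_{S^{d-1}} ∫_0^∞ (1 - e^{i⟨r^E θ, ξ⟩} + 1_{(0,1)}(r) i⟨r^E θ, ξ⟩) r^{-2} dr σ(dθ)`. -/
noncomputable def symb {d : ℕ} (σ : Measure (Metric.sphere (0 : EuclideanSpace ℝ (Fin d)) 1))
    (E : Matrix (Fin d) (Fin d) ℝ) (ξ : EuclideanSpace ℝ (Fin d)) : ℂ :=
  ∫ θ, (∫ r in Set.Ioi (0:ℝ),
      (1 - Complex.exp (Complex.I *
          ((inner ℝ (mexp E r (θ : EuclideanSpace ℝ (Fin d))) ξ : ℝ) : ℂ)) +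
        (Set.Ioo (0:ℝ) 1).indicator
          (fun _ => Complex.I *
            ((inner ℝ (mexp E r (θ : EuclideanSpace ℝ (Fin d))) ξ : ℝ) : ℂ)) r) / ((r : ℂ) ^ 2)
    ∂volume) ∂σ

lemma exp_apply_eigen {d : ℕ} (T : EuclideanSpace ℝ (Fin d) →L[ℝ] EuclideanSpace ℝ (Fin d))
    (v : EuclideanSpace ℝ (Fin d)) (μ : ℝ) (h : T v = μ • v) :
    NormedSpace.exp T v = Real.exp μ • v := by
  have hpow : ∀ n : ℕ, (T ^ n) v = μ ^ n • v := by
    intro n; induction n with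
    | zero => simp
    | succ n ih =>
      rw [pow_succ, ContinuousLinearMap.mul_apply, h, ContinuousLinearMap.map_smul, ih,
        smul_smul, pow_succ, mul_comm]
  have hs : Summable fun n : ℕ => ((n ! : ℝ))⁻¹ • T ^ n := NormedSpace.expSeries_summable' T
  have hs2 : Summable fun n : ℕ => ((n ! : ℝ))⁻¹ * μ ^ n := by
    simpa [smul_eq_mul] using NormedSpace.expSeries_summable' (𝕂 := ℝ) μ
  rw [NormedSpace.exp_eq_tsum ℝ]
  have key := (ContinuousLinearMap.apply ℝ (EuclideanSpace ℝ (Fin d)) v).map_tsum hs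
  simp only [ContinuousLinearMap.apply_apply] at key
  rw [key]
  have h2 : ∀ n : ℕ, (((n ! : ℝ))⁻¹ • T ^ n) v = (((n ! : ℝ))⁻¹ * μ ^ n) • v := by
    intro n
    rw [ContinuousLinearMap.smul_apply, hpow, smul_smul]
  simp_rw [h2]
  rw [hs2.tsum_smul_const, Real.exp_eq_exp_ℝ, NormedSpace.exp_eq_tsum ℝ]
  simp [smul_eq_mul]

lemma toCLM_eigen {d : ℕ} {A : Matrix (Fin d) (Fin d) ℝ} (hA : A.IsHermitian) (i : Fin d) :
    toCLM A (hA.eigenvectorBasis i) = hA.eigenvalues i • hA.eigenvectorBasis i := by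
  have h := hA.mulVec_eigenvectorBasis i
  ext j
  have := congrFun h j
  simpa [toCLM, Matrix.toEuclideanLin_apply] using this

lemma mexp_eigen {d : ℕ} {A : Matrix (Fin d) (Fin d) ℝ} (hA : A.IsHermitian) {r : ℝ}
    (hr : 0 < r) (i : Fin d) :
    mexp A r (hA.eigenvectorBasis i) = (r ^ (hA.eigenvalues i)) • hA.eigenvectorBasis i := by
  rw [mexp, exp_apply_eigen _ _ (Real.log r * hA.eigenvalues i), Real.rpow_def_of_pos hr]
  rw [ContinuousLinearMap.smul_apply, toCLM_eigen hA, smul_smul]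

lemma mexp_norm_le {d : ℕ} {A : Matrix (Fin d) (Fin d) ℝ} (hA : A.IsHermitian) {a : ℝ}
    (hev : ∀ i, a ≤ hA.eigenvalues i) {r : ℝ} (hr : 0 < r) (hr1 : r ≤ 1)
    (y : EuclideanSpace ℝ (Fin d)) : ‖mexp A r y‖ ≤ r ^ a * ‖y‖ := by
  set b := hA.eigenvectorBasis
  have hcoord : ∀ j, b.repr (mexp A r y) j = (b.repr y j * r ^ (hA.eigenvalues j)) := by
    intro j
    conv_lhs => rw [← b.sum_repr y, map_sum]
    simp_rw [map_smul, show ∀ i, mexp A r (b i) = (r ^ (hA.eigenvalues i)) • b i from mexp_eigen hA hr, smul_smul]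
    rw [OrthonormalBasis.repr_apply_apply]
    exact b.orthonormal.inner_right_fintype _ j
  have hnorm : ‖mexp A r y‖ = ‖b.repr (mexp A r y)‖ := (b.repr.norm_map _).symm
  have hnorm2 : ‖y‖ = ‖b.repr y‖ := (b.repr.norm_map _).symm
  rw [hnorm, hnorm2, EuclideanSpace.norm_eq, EuclideanSpace.norm_eq]
  rw [← Real.sqrt_sq (le_of_lt (Real.rpow_pos_of_pos hr a)), ← Real.sqrt_mul (sq_nonneg _)]
  apply Real.sqrt_le_sqrt
  rw [Finset.mul_sum]
  apply Finset.sum_le_sum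
  intro j _
  rw [hcoord j]
  have h1 : 0 < r ^ hA.eigenvalues j := Real.rpow_pos_of_pos hr _
  have h2 : r ^ hA.eigenvalues j ≤ r ^ a := Real.rpow_le_rpow_of_exponent_ge hr hr1 (hev j)
  rw [Real.norm_eq_abs, Real.norm_eq_abs, abs_mul, mul_pow, mul_comm]
  gcongr
  rw [abs_of_pos h1]
  exact h2

lemma key_bound (u : ℝ) :
    ‖1 - Complex.exp (Complex.I * u) + Complex.I * u‖ ≤ 3 * u ^ 2 := by
  have habs : ‖Complex.I * u‖ = |u| := by simp
  have hsum : (∑ m ∈ Finset.range 2, (Complex.I * u) ^ m / m.factorial) = 1 + Complex.I * u := by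
    simp [Finset.sum_range_succ]
  have hrw : 1 - Complex.exp (Complex.I * u) + Complex.I * u
      = -(Complex.exp (Complex.I * u) - ∑ m ∈ Finset.range 2, (Complex.I * u) ^ m / m.factorial) := by
    rw [hsum]; ring
  rw [hrw, norm_neg]
  rcases le_or_gt (|u|) 1 with hu | hu
  · have hb := Complex.exp_bound (x := Complex.I * u) (by rw [habs]; exact hu)
      (n := 2) (by norm_num)
    rw [habs] at hb
    refine hb.trans ?_
    rw [sq_abs]
    norm_num
    nlinarith [sq_nonneg u]
  · have h2 : ‖Complex.exp (Complex.I * u)‖ = 1 := by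
      rw [Complex.norm_exp]; simp
    calc ‖_‖
        ≤ ‖Complex.exp (Complex.I * u)‖
          + ‖∑ m ∈ Finset.range 2, (Complex.I * u) ^ m / m.factorial‖ :=
          norm_sub_le _ _
    _ ≤ 1 + (1 + |u|) := by
          rw [h2, hsum]
          gcongr
          exact le_trans (norm_add_le _ _) (by simp)
    _ ≤ 3 * u ^ 2 := by nlinarith [sq_nonneg u, abs_nonneg u, sq_abs u]

theorem stmt10 (d : ℕ) (a : ℝ) (ha : 1/2 < a)
    (σ : Measure (Metric.sphere (0 : EuclideanSpace ℝ (Fin d)) 1)) [IsFiniteMeasure σ]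
    (E : EuclideanSpace ℝ (Fin d) → Matrix (Fin d) (Fin d) ℝ)
    (hsym : ∀ x, (E x).IsHermitian)
    (heig : ∀ x i, a ≤ (hsym x).eigenvalues i) :
    ∃ C : ℝ, 0 < C ∧ ∀ (x ξ : EuclideanSpace ℝ (Fin d)),
      ‖symb σ (E x) ξ‖ ≤ C * (1 + ‖ξ‖ ^ 2) := by
  set I₁ : ℝ := ∫ r in Set.Ioo (0:ℝ) 1, r ^ (2*a-2) with hI₁
  set I₂ : ℝ := ∫ r in Set.Ici (1:ℝ), r ^ (-2:ℝ) with hI₂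
  have hI₁int : IntegrableOn (fun r : ℝ => r ^ (2*a-2)) (Set.Ioo 0 1) :=
    (intervalIntegral.integrableOn_Ioo_rpow_iff zero_lt_one).mpr (by linarith)
  have hI₂int : IntegrableOn (fun r : ℝ => r ^ (-2:ℝ)) (Set.Ici 1) :=
    Iff.mpr integrableOn_Ici_iff_integrableOn_Ioi
      (integrableOn_Ioi_rpow_of_lt (by norm_num) one_pos)
  have hI₁0 : 0 ≤ I₁ :=
    setIntegral_nonneg measurableSet_Ioo (fun x hx => Real.rpow_nonneg hx.1.le _)
  have hI₂0 : 0 ≤ I₂ :=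
    setIntegral_nonneg measurableSet_Ici
      (fun x hx => Real.rpow_nonneg (le_trans zero_le_one hx) _)
  have hσ : (0:ℝ) ≤ (σ Set.univ).toReal := ENNReal.toReal_nonneg
  refine ⟨(σ Set.univ).toReal * (3 * I₁ + 2 * I₂) + 1, by nlinarith, ?_⟩
  intro x ξ
  set A := E x
  have hA : A.IsHermitian := hsym x
  have hev : ∀ i, a ≤ hA.eigenvalues i := heig x
  -- inner bound
  have inner_bound : ∀ θ : Metric.sphere (0 : EuclideanSpace ℝ (Fin d)) 1,
      ‖(∫ r in Set.Ioi (0:ℝ),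
          (1 - Complex.exp (Complex.I *
              ((inner ℝ (mexp A r (θ : EuclideanSpace ℝ (Fin d))) ξ : ℝ) : ℂ)) +
            (Set.Ioo (0:ℝ) 1).indicator
              (fun _ => Complex.I *
                ((inner ℝ (mexp A r (θ : EuclideanSpace ℝ (Fin d))) ξ : ℝ) : ℂ)) r) / ((r : ℂ) ^ 2)
        ∂volume)‖ ≤ (3 * I₁ + 2 * I₂) * (1 + ‖ξ‖ ^ 2) := by
    intro θ
    set g : ℝ → ℝ := fun r =>
      (Set.Ioo (0:ℝ) 1).indicator (fun r => (3 * ‖ξ‖ ^ 2) * r ^ (2*a-2)) r +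
      (Set.Ici (1:ℝ)).indicator (fun r => 2 * r ^ (-2:ℝ)) r with hg
    have hg1 : Integrable ((Set.Ioo (0:ℝ) 1).indicator (fun r => (3 * ‖ξ‖ ^ 2) * r ^ (2*a-2)))
        (volume.restrict (Set.Ioi 0)) :=
      (IntegrableOn.integrable_indicator (hI₁int.const_mul _) measurableSet_Ioo).restrict
    have hg2 : Integrable ((Set.Ici (1:ℝ)).indicator (fun r => 2 * r ^ (-2:ℝ)))
        (volume.restrict (Set.Ioi 0)) :=
      (IntegrableOn.integrable_indicator (hI₂int.const_mul _) measurableSet_Ici).restrict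
    have hgint : Integrable g (volume.restrict (Set.Ioi 0)) := hg1.add hg2
    have hptwise : ∀ r ∈ Set.Ioi (0:ℝ),
        ‖(1 - Complex.exp (Complex.I *
              ((inner ℝ (mexp A r (θ : EuclideanSpace ℝ (Fin d))) ξ : ℝ) : ℂ)) +
            (Set.Ioo (0:ℝ) 1).indicator
              (fun _ => Complex.I *
                ((inner ℝ (mexp A r (θ : EuclideanSpace ℝ (Fin d))) ξ : ℝ) : ℂ)) r) / ((r : ℂ) ^ 2)‖
          ≤ g r := by
      intro r hr
      have hr0 : (0:ℝ) < r := hr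
      set u : ℝ := inner ℝ (mexp A r (θ : EuclideanSpace ℝ (Fin d))) ξ with hu
      have hden : ‖((r : ℂ) ^ 2)‖ = r ^ 2 := by
        rw [norm_pow, Complex.norm_real, Real.norm_eq_abs, abs_of_pos hr0]
      rcases lt_or_ge r 1 with hr1 | hr1
      · -- small r
        have hmem : r ∈ Set.Ioo (0:ℝ) 1 := ⟨hr0, hr1⟩
        have hnotmem : r ∉ Set.Ici (1:ℝ) := by simp [Set.mem_Ici]; linarith
        have hgr : g r = (3 * ‖ξ‖ ^ 2) * r ^ (2*a-2) := by
          simp only [hg, Set.indicator_of_mem hmem, Set.indicator_of_notMem hnotmem, add_zero]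
        rw [Set.indicator_of_mem hmem, hgr]
        have hub : |u| ≤ r ^ a * ‖ξ‖ := by
          refine (abs_real_inner_le_norm _ _).trans ?_
          have h1 : ‖mexp A r (θ : EuclideanSpace ℝ (Fin d))‖ ≤ r ^ a * 1 := by
            have := mexp_norm_le hA hev hr0 hr1.le (θ : EuclideanSpace ℝ (Fin d))
            rwa [norm_eq_of_mem_sphere θ] at this
          calc ‖mexp A r (θ : EuclideanSpace ℝ (Fin d))‖ * ‖ξ‖ ≤ (r ^ a * 1) * ‖ξ‖ := by
                gcongr
          _ = r ^ a * ‖ξ‖ := by ring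
        have hnum : ‖1 - Complex.exp (Complex.I * (u:ℂ)) + Complex.I * (u:ℂ)‖ ≤ 3 * u ^ 2 :=
          key_bound u
        rw [norm_div, hden]
        rw [div_le_iff₀ (by positivity)]
        refine hnum.trans ?_
        have hu2 : u ^ 2 ≤ (r ^ a) ^ 2 * ‖ξ‖ ^ 2 := by
          rw [← sq_abs u]
          calc |u| ^ 2 ≤ (r ^ a * ‖ξ‖) ^ 2 := by
                have := abs_nonneg u
                gcongr
          _ = (r ^ a) ^ 2 * ‖ξ‖ ^ 2 := by ring
        have hrpow : (r ^ a) ^ 2 = r ^ (2*a-2) * r ^ 2 := by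
          rw [← Real.rpow_natCast (r ^ a) 2, ← Real.rpow_natCast r 2,
            ← Real.rpow_mul hr0.le, ← Real.rpow_add hr0]
          norm_num
          ring_nf
        nlinarith [Real.rpow_pos_of_pos hr0 (2*a-2), sq_nonneg ‖ξ‖, sq_nonneg u,
          Real.rpow_pos_of_pos hr0 a]
      · -- large r
        have hnotmem : r ∉ Set.Ioo (0:ℝ) 1 := by simp [Set.mem_Ioo]; intro; linarith
        have hmem : r ∈ Set.Ici (1:ℝ) := hr1
        have hgr : g r = 2 * r ^ (-2:ℝ) := by
          simp only [hg, Set.indicator_of_mem hmem, Set.indicator_of_notMem hnotmem, zero_add]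
        rw [Set.indicator_of_notMem hnotmem, add_zero, hgr]
        rw [norm_div, hden]
        rw [div_le_iff₀ (by positivity)]
        have h2 : ‖(1:ℂ) - Complex.exp (Complex.I * (u:ℂ))‖ ≤ 2 := by
          refine (norm_sub_le _ _).trans ?_
          have : ‖Complex.exp (Complex.I * (u:ℂ))‖ = 1 := by
            rw [Complex.norm_exp]; simp
          rw [this]; norm_num
        refine h2.trans ?_
        rw [Real.rpow_neg hr0.le]
        rw [mul_assoc, Real.rpow_two]
        rw [inv_mul_cancel₀ (by positivity)]
        linarith
    have hbound := norm_integral_le_of_norm_le hgint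
      ((ae_restrict_iff' measurableSet_Ioi).mpr (ae_of_all _ hptwise))
    refine hbound.trans ?_
    have hsplit : ∫ r in Set.Ioi (0:ℝ), g r = (3 * ‖ξ‖ ^ 2) * I₁ + 2 * I₂ := by
      rw [hg]
      rw [integral_add hg1 hg2]
      congr 1
      · rw [setIntegral_indicator measurableSet_Ioo,
          Set.inter_eq_self_of_subset_right Set.Ioo_subset_Ioi_self, integral_const_mul]
      · rw [setIntegral_indicator measurableSet_Ici]
        have : Set.Ioi (0:ℝ) ∩ Set.Ici 1 = Set.Ici 1 :=
          Set.inter_eq_self_of_subset_right (fun y hy => show (0:ℝ) < y from lt_of_lt_of_le one_pos hy)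
        rw [this, integral_const_mul]
    rw [hsplit]
    nlinarith [sq_nonneg ‖ξ‖]
  have houter := norm_integral_le_of_norm_le
    (integrable_const ((3 * I₁ + 2 * I₂) * (1 + ‖ξ‖ ^ 2)) (μ := σ))
    (ae_of_all σ inner_bound)
  rw [integral_const, smul_eq_mul, measureReal_def] at houter
  refine houter.trans ?_
  nlinarith [sq_nonneg ‖ξ‖, mul_nonneg hσ (by nlinarith : (0:ℝ) ≤ 3 * I₁ + 2 * I₂)]
end

section
/- Let E be a symmetric invertible d×d matrix with eigenvalues in [λ, Λ] where λ > 0. Every ξ ∈ ℝ^d \ {0} has a unique representation ξ = τ(ξ)^E ℓ(ξ) with τ(ξ) > 0 and ℓ(ξ) ∈ S^{d−1} (generalized polar coordinates). Then there exist constants C₁, C₂, C₃, C₄ > 0 such that: (i) for ‖ξ‖ ≤ 1, C₁‖ξ‖^{1/λ} ≤ τ(ξ) ≤ C₂‖ξ‖^{1/Λ}; (ii) for ‖ξ‖ ≥ 1, C₃‖ξ‖^{1/Λ} ≤ τ(ξ) ≤ C₄‖ξ‖^{1/λ}. -/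
open Matrix MeasureTheory
open scoped ENNReal

lemma exp_apply_eigen_s13 {V : Type*} [NormedAddCommGroup V] [NormedSpace ℝ V] [CompleteSpace V]
    (T : V →L[ℝ] V) (v : V) (c : ℝ) (h : T v = c • v) :
    NormedSpace.exp T v = Real.exp c • v := by
  have hpow : ∀ n : ℕ, (T ^ n) v = c ^ n • v := by
    intro n
    induction n with
    | zero => simp
    | succ n ih =>
      rw [pow_succ, pow_succ, ContinuousLinearMap.mul_apply, h,  (T ^ n).map_smul, ih, smul_smul,
        mul_comm]
  have hsum := NormedSpace.expSeries_summable' (𝕂 := ℝ) T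
  have hsum2 : Summable fun n : ℕ => ((n.factorial : ℝ))⁻¹ * c ^ n := by
    simpa [smul_eq_mul] using NormedSpace.expSeries_summable' (𝕂 := ℝ) (𝔸 := ℝ) c
  calc NormedSpace.exp T v = (∑' n : ℕ, ((n.factorial : ℝ))⁻¹ • T ^ n) v := by
        rw [NormedSpace.exp_eq_tsum ℝ]
    _ = ∑' n : ℕ, (((n.factorial : ℝ))⁻¹ • T ^ n) v :=
        ((ContinuousLinearMap.apply ℝ V v).map_tsum hsum)
    _ = ∑' n : ℕ, (((n.factorial : ℝ))⁻¹ * c ^ n) • v := by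
        simp only [ContinuousLinearMap.smul_apply, hpow, smul_smul]
    _ = (∑' n : ℕ, ((n.factorial : ℝ))⁻¹ * c ^ n) • v := hsum2.tsum_smul_const v
    _ = Real.exp c • v := by
        congr 1
        rw [Real.exp_eq_exp_ℝ, NormedSpace.exp_eq_tsum ℝ]
        simp [smul_eq_mul]

lemma toCLM_eigen_s13 {d : ℕ} (E : Matrix (Fin d) (Fin d) ℝ) (hE : E.IsHermitian) (i : Fin d) :
    toCLM E (hE.eigenvectorBasis i) = hE.eigenvalues i • hE.eigenvectorBasis i := by
  have h := hE.mulVec_eigenvectorBasis i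
  show Matrix.toEuclideanLin E (hE.eigenvectorBasis i) = _
  rw [Matrix.toEuclideanLin_apply]
  exact congrArg (WithLp.equiv 2 (Fin d → ℝ)).symm h

lemma mexp_eigen_s13 {d : ℕ} (E : Matrix (Fin d) (Fin d) ℝ) (hE : E.IsHermitian) (r : ℝ) (i : Fin d) :
    mexp E r (hE.eigenvectorBasis i)
      = Real.exp (Real.log r * hE.eigenvalues i) • hE.eigenvectorBasis i := by
  apply exp_apply_eigen_s13
  rw [ContinuousLinearMap.smul_apply, toCLM_eigen_s13 E hE i, smul_smul]

lemma norm_mexp_bounds {d : ℕ} (E : Matrix (Fin d) (Fin d) ℝ) (hE : E.IsHermitian)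
    (r a b : ℝ) (ha : 0 ≤ a) (hb : 0 ≤ b)
    (hab : ∀ i, a ≤ Real.exp (Real.log r * hE.eigenvalues i) ∧
      Real.exp (Real.log r * hE.eigenvalues i) ≤ b)
    (x : EuclideanSpace ℝ (Fin d)) :
    a * ‖x‖ ≤ ‖mexp E r x‖ ∧ ‖mexp E r x‖ ≤ b * ‖x‖ := by
  set B := hE.eigenvectorBasis with hB
  set e : Fin d → ℝ := fun i => Real.exp (Real.log r * hE.eigenvalues i) with he
  set c : Fin d → ℝ := fun i => B.repr x i with hc
  have hy : mexp E r x = ∑ j, (e j * c j) • B j := by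
    conv_lhs => rw [← B.sum_repr x]
    rw [map_sum]
    congr 1
    funext j
    rw [ContinuousLinearMap.map_smul, mexp_eigen_s13 E hE r j, smul_smul, mul_comm]
  have hrepr : ∀ i, B.repr (mexp E r x) i = e i * c i := by
    intro i
    rw [B.repr_apply_apply, hy, B.orthonormal.inner_right_fintype]
  have hnorm : ∀ (y : EuclideanSpace ℝ (Fin d)),
      ‖y‖ = Real.sqrt (∑ i, (B.repr y i) ^ 2) := by
    intro y
    rw [← B.repr.norm_map y, EuclideanSpace.norm_eq]
    congr 1
    exact Finset.sum_congr rfl fun i _ => by rw [Real.norm_eq_abs, sq_abs]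
  have hxnorm : ‖x‖ = Real.sqrt (∑ i, (c i) ^ 2) := hnorm x
  have hynorm : ‖mexp E r x‖ = Real.sqrt (∑ i, (e i * c i) ^ 2) := by
    rw [hnorm (mexp E r x)]
    congr 1
    exact Finset.sum_congr rfl fun i _ => by rw [hrepr i]
  have hsq : ∀ i, a ^ 2 * (c i) ^ 2 ≤ (e i * c i) ^ 2 ∧ (e i * c i) ^ 2 ≤ b ^ 2 * (c i) ^ 2 := by
    intro i
    obtain ⟨h1, h2⟩ := hab i
    constructor
    · rw [mul_pow]
      exact mul_le_mul_of_nonneg_right (pow_le_pow_left₀ ha h1 2) (sq_nonneg _)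
    · rw [mul_pow]
      exact mul_le_mul_of_nonneg_right (pow_le_pow_left₀ (ha.trans h1) h2 2) (sq_nonneg _)
  constructor
  · rw [hxnorm, hynorm, ← Real.sqrt_sq ha, ← Real.sqrt_mul (sq_nonneg a), Finset.mul_sum]
    exact Real.sqrt_le_sqrt (Finset.sum_le_sum fun i _ => (hsq i).1)
  · rw [hxnorm, hynorm, ← Real.sqrt_sq hb, ← Real.sqrt_mul (sq_nonneg b), Finset.mul_sum]
    exact Real.sqrt_le_sqrt (Finset.sum_le_sum fun i _ => (hsq i).2)

lemma trick1 {r N p : ℝ} (hr : 0 < r) (hp : 0 < p) (h : r ^ p ≤ N) : r ≤ N ^ (1 / p) := by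
  have h2 := Real.rpow_le_rpow (Real.rpow_nonneg hr.le p) h (one_div_nonneg.2 hp.le)
  rwa [← Real.rpow_mul hr.le, mul_one_div_cancel hp.ne', Real.rpow_one] at h2

lemma trick2 {r N p : ℝ} (hr : 0 < r) (hp : 0 < p) (hN : 0 ≤ N) (h : N ≤ r ^ p) :
    N ^ (1 / p) ≤ r := by
  have h2 := Real.rpow_le_rpow hN h (one_div_nonneg.2 hp.le)
  rwa [← Real.rpow_mul hr.le, mul_one_div_cancel hp.ne', Real.rpow_one] at h2

theorem stmt13 (d : ℕ) (E : Matrix (Fin d) (Fin d) ℝ) (hE : E.IsHermitian)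
    (lam Lam : ℝ) (hlam : 0 < lam)
    (hlo : ∀ i, lam ≤ hE.eigenvalues i) (hhi : ∀ i, hE.eigenvalues i ≤ Lam)
    (τ : EuclideanSpace ℝ (Fin d) → ℝ)
    (l : EuclideanSpace ℝ (Fin d) → EuclideanSpace ℝ (Fin d))
    (hpolar : ∀ ξ : EuclideanSpace ℝ (Fin d), ξ ≠ 0 →
      0 < τ ξ ∧ ‖l ξ‖ = 1 ∧ mexp E (τ ξ) (l ξ) = ξ)
    (huniq : ∀ ξ : EuclideanSpace ℝ (Fin d), ξ ≠ 0 →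
      ∀ (s : ℝ) (θ : EuclideanSpace ℝ (Fin d)), 0 < s → ‖θ‖ = 1 →
        mexp E s θ = ξ → s = τ ξ ∧ θ = l ξ) :
    ∃ C₁ C₂ C₃ C₄ : ℝ, 0 < C₁ ∧ 0 < C₂ ∧ 0 < C₃ ∧ 0 < C₄ ∧
      ∀ ξ : EuclideanSpace ℝ (Fin d), ξ ≠ 0 →
        (‖ξ‖ ≤ 1 → C₁ * ‖ξ‖ ^ (1 / lam) ≤ τ ξ ∧ τ ξ ≤ C₂ * ‖ξ‖ ^ (1 / Lam)) ∧
        (1 ≤ ‖ξ‖ → C₃ * ‖ξ‖ ^ (1 / Lam) ≤ τ ξ ∧ τ ξ ≤ C₄ * ‖ξ‖ ^ (1 / lam)) := by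
  refine ⟨1, 1, 1, 1, one_pos, one_pos, one_pos, one_pos, fun ξ hξ => ?_⟩
  rcases Nat.eq_zero_or_pos d with hd | hd
  · subst hd
    exact absurd (Subsingleton.elim ξ 0) hξ
  have i0 : Fin d := ⟨0, hd⟩
  have hLam : 0 < Lam := hlam.trans_le ((hlo i0).trans (hhi i0))
  obtain ⟨hτ, hl, hmex⟩ := hpolar ξ hξ
  set r := τ ξ with hrdef
  have hnξ : 0 < ‖ξ‖ := norm_pos_iff.2 hξ
  -- exp(log r * μ) = r ^ μ
  have hexp : ∀ y : ℝ, Real.exp (Real.log r * y) = r ^ y := fun y =>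
    (Real.rpow_def_of_pos hτ y).symm
  -- case r ≤ 1
  have est_le : r ≤ 1 → r ^ Lam ≤ ‖ξ‖ ∧ ‖ξ‖ ≤ r ^ lam := by
    intro hr1
    have hlog : Real.log r ≤ 0 := Real.log_nonpos hτ.le hr1
    have key := norm_mexp_bounds E hE r (r ^ Lam) (r ^ lam)
      (Real.rpow_nonneg hτ.le Lam) (Real.rpow_nonneg hτ.le lam)
      (fun i => by
        rw [← hexp Lam, ← hexp lam]
        exact ⟨Real.exp_le_exp.2 (mul_le_mul_of_nonpos_left (hhi i) hlog),
          Real.exp_le_exp.2 (mul_le_mul_of_nonpos_left (hlo i) hlog)⟩) (l ξ)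
    rw [hmex, hl, mul_one, mul_one] at key
    exact key
  -- case r ≥ 1
  have est_ge : 1 ≤ r → r ^ lam ≤ ‖ξ‖ ∧ ‖ξ‖ ≤ r ^ Lam := by
    intro hr1
    have hlog : 0 ≤ Real.log r := Real.log_nonneg hr1
    have key := norm_mexp_bounds E hE r (r ^ lam) (r ^ Lam)
      (Real.rpow_nonneg hτ.le lam) (Real.rpow_nonneg hτ.le Lam)
      (fun i => by
        rw [← hexp Lam, ← hexp lam]
        exact ⟨Real.exp_le_exp.2 (mul_le_mul_of_nonneg_left (hlo i) hlog),
          Real.exp_le_exp.2 (mul_le_mul_of_nonneg_left (hhi i) hlog)⟩) (l ξ)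
    rw [hmex, hl, mul_one, mul_one] at key
    exact key
  constructor
  · intro hle
    have hr1 : r ≤ 1 := by
      by_contra hcon
      push_neg at hcon
      have h1 := (est_ge hcon.le).1
      have h2 : (1 : ℝ) < r ^ lam := Real.one_lt_rpow_iff_of_pos hτ |>.2 (Or.inl ⟨hcon, hlam⟩)
      linarith
    obtain ⟨h1, h2⟩ := est_le hr1
    exact ⟨by rw [one_mul]; exact trick2 hτ hlam hnξ.le h2, by rw [one_mul]; exact trick1 hτ hLam h1⟩
  · intro hge
    have hr1 : 1 ≤ r := by
      by_contra hcon
      push_neg at hcon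
      have h2 := (est_le hcon.le).2
      have h3 : r ^ lam < 1 := Real.rpow_lt_one hτ.le hcon hlam
      linarith
    obtain ⟨h1, h2⟩ := est_ge hr1
    exact ⟨by rw [one_mul]; exact trick2 hτ hLam hnξ.le h2, by rw [one_mul]; exact trick1 hτ hlam h1⟩
end
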